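/- Let Z be a proper geodesic δ-hyperbolic space and g a loxodromic isometry with attracting fixed point y_g. Then for any geodesic ray σ with σ(∞) = y_g and any w ∈ Z, |β_σ(w, gw) − ℓ(g)| ≤ 92δ. -/

import Mathlib

open Filter Metric Set

noncomputable def gromovProd {Z : Type*} [MetricSpace Z] (x y z : Z) : ℝ :=
  (dist x y + dist x z - dist y z) / 2

/-- `Z` is δ-hyperbolic in the Gromov product sense. -/
def IsDeltaHyperbolic (Z : Type*) [MetricSpace Z] (δ : ℝ) : Prop :=
  ∀ w x y z : Z, min (gromovProd x w y) (gromovProd x y z) - δ ≤ gromovProd x w z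

/-- `f` parametrizes a geodesic segment from `x` to `y` by arclength on `[0, dist x y]`. -/
def IsGeodesicSegment {Z : Type*} [MetricSpace Z] (f : ℝ → Z) (x y : Z) : Prop :=
  f 0 = x ∧ f (dist x y) = y ∧
    ∀ s ∈ Set.Icc (0:ℝ) (dist x y), ∀ t ∈ Set.Icc (0:ℝ) (dist x y),
      dist (f s) (f t) = |s - t|

/-- `Z` is a geodesic metric space. -/
def IsGeodesicSpace (Z : Type*) [MetricSpace Z] : Prop :=
  ∀ x y : Z, ∃ f : ℝ → Z, IsGeodesicSegment f x y

/-- The image of the geodesic segment `[x,y]` parametrized by `f`. -/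
def segImage {Z : Type*} [MetricSpace Z] (f : ℝ → Z) (x y : Z) : Set Z :=
  f '' Set.Icc 0 (dist x y)

/-- A geodesic ray: an isometric embedding of `[0,∞)`. -/
def IsGeodesicRay {Z : Type*} [MetricSpace Z] (σ : ℝ → Z) : Prop :=
  ∀ s t : ℝ, 0 ≤ s → 0 ≤ t → dist (σ s) (σ t) = |s - t|

/-- A bi-infinite geodesic: an isometric embedding of `ℝ`. -/
def IsBiInfGeodesic {Z : Type*} [MetricSpace Z] (γ : ℝ → Z) : Prop :=
  ∀ s t : ℝ, dist (γ s) (γ t) = |s - t|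

/-- Two geodesic rays are asymptotic (same endpoint at infinity):
their images are at finite Hausdorff distance. -/
def AsymptoticRays {Z : Type*} [MetricSpace Z] (σ σ' : ℝ → Z) : Prop :=
  EMetric.hausdorffEdist (σ '' Set.Ici 0) (σ' '' Set.Ici 0) ≠ ⊤

/-- Extended Gromov product (with respect to `x`) of the two boundary points
represented by the geodesic rays `σ`, `σ'`. -/
noncomputable def extGP {Z : Type*} [MetricSpace Z] (x : Z) (σ σ' : ℝ → Z) : EReal :=
  Filter.liminf (fun p : ℝ × ℝ => ((gromovProd x (σ p.1) (σ' p.2) : ℝ) : EReal))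
    (Filter.atTop ×ˢ Filter.atTop)

/-- Extended Gromov product (with respect to `x`) of a point `y ∈ Z` and the boundary
point represented by the geodesic ray `σ`. -/
noncomputable def ptRayGP {Z : Type*} [MetricSpace Z] (x y : Z) (σ : ℝ → Z) : EReal :=
  Filter.liminf (fun t : ℝ => ((gromovProd x y (σ t) : ℝ) : EReal)) Filter.atTop

/-- The visual quasi-metric `d_x(ξ,η) = exp(-2⟨ξ,η⟩_x)` on the Gromov boundary,
for boundary points represented by geodesic rays. -/
noncomputable def visDist {Z : Type*} [MetricSpace Z] (x : Z) (σ σ' : ℝ → Z) : ℝ :=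
  if extGP x σ σ' = ⊤ then 0 else Real.exp (-2 * (extGP x σ σ').toReal)

namespace Stmt19

variable {Z : Type*} [MetricSpace Z]

lemma gp_nonneg (x y z : Z) : 0 ≤ gromovProd x y z := by
  have h := dist_triangle y x z
  rw [dist_comm y x] at h
  unfold gromovProd; linarith

lemma gp_le (x y z : Z) : gromovProd x y z ≤ dist x y := by
  have h := dist_triangle x y z
  unfold gromovProd; linarith

lemma gp_comm (x y z : Z) : gromovProd x y z = gromovProd x z y := by
  unfold gromovProd; rw [dist_comm y z]; ring

lemma gp_base_move (x v y z : Z) : gromovProd x y z - dist x v ≤ gromovProd v y z := by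
  have h1 := dist_triangle x v y
  have h2 := dist_triangle x v z
  unfold gromovProd; linarith

lemma gp_mid_move (x y y' z : Z) : gromovProd x y z - dist y y' ≤ gromovProd x y' z := by
  have h1 := dist_triangle x y' y
  have h2 := dist_triangle y' y z
  rw [dist_comm y' y] at h1 h2
  unfold gromovProd; linarith

lemma gp_ge_dist_sub (x y z : Z) : dist x y - dist y z ≤ gromovProd x y z := by
  have h := dist_triangle x z y
  rw [dist_comm z y] at h
  unfold gromovProd; linarith

/-- Busemann function of a ray. -/
noncomputable def buse (τ : ℝ → Z) (z : Z) : ℝ := ⨅ t : ℝ, (dist z (τ (max t 0)) - max t 0)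

lemma ray_dist_ge {τ : ℝ → Z} (hτ : IsGeodesicRay τ) (z : Z) {t : ℝ} (ht : 0 ≤ t) :
    t - dist z (τ 0) ≤ dist z (τ t) := by
  have h := dist_triangle (τ 0) z (τ t)
  have he : dist (τ 0) (τ t) = t := by
    rw [hτ 0 t le_rfl ht, abs_of_nonpos (by linarith), neg_sub, sub_zero]
  rw [dist_comm (τ 0) z] at h
  linarith

lemma ray_dist_le {τ : ℝ → Z} (hτ : IsGeodesicRay τ) (z : Z) {t : ℝ} (ht : 0 ≤ t) :
    dist z (τ t) ≤ dist z (τ 0) + t := by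
  have h := dist_triangle z (τ 0) (τ t)
  have he : dist (τ 0) (τ t) = t := by
    rw [hτ 0 t le_rfl ht, abs_of_nonpos (by linarith), neg_sub, sub_zero]
  linarith

lemma buse_tendsto {τ : ℝ → Z} (hτ : IsGeodesicRay τ) (z : Z) :
    Tendsto (fun t => dist z (τ t) - t) atTop (nhds (buse τ z)) := by
  have hanti : Antitone (fun t : ℝ => dist z (τ (max t 0)) - max t 0) := by
    intro s t hst
    have h0s : (0:ℝ) ≤ max s 0 := le_max_right _ 0
    have h0t : (0:ℝ) ≤ max t 0 := le_max_right _ 0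
    have hm : max s 0 ≤ max t 0 := max_le_max hst le_rfl
    have hd := dist_triangle z (τ (max s 0)) (τ (max t 0))
    rw [hτ _ _ h0s h0t, abs_of_nonpos (by linarith)] at hd
    simp only
    linarith
  have hbdd : BddBelow (range fun t : ℝ => dist z (τ (max t 0)) - max t 0) := by
    refine ⟨-dist z (τ 0), ?_⟩
    rintro u ⟨t, rfl⟩
    have := ray_dist_ge hτ z (le_max_right t 0)
    simp only
    linarith
  have h := tendsto_atTop_ciInf hanti hbdd
  refine h.congr' ?_
  filter_upwards [eventually_ge_atTop (0:ℝ)] with t ht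
  rw [max_eq_left ht]

lemma buse_diff_le {τ : ℝ → Z} (hτ : IsGeodesicRay τ) (u v : Z) :
    buse τ u - buse τ v ≤ dist u v := by
  have h := (buse_tendsto hτ u).sub (buse_tendsto hτ v)
  refine le_of_tendsto h ?_
  filter_upwards with t
  have := dist_triangle u v (τ t)
  simp only [sub_sub_sub_cancel_right]
  linarith

/-- Limit Gromov product `lim_t (u, τ t)_v`, expressed via Busemann functions. -/
noncomputable def rGP (τ : ℝ → Z) (u v : Z) : ℝ := (dist u v + buse τ v - buse τ u) / 2

lemma rGP_tendsto {τ : ℝ → Z} (hτ : IsGeodesicRay τ) (u v : Z) :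
    Tendsto (fun t => gromovProd v u (τ t)) atTop (nhds (rGP τ u v)) := by
  have h := (((tendsto_const_nhds : Tendsto (fun _ : ℝ => dist u v) atTop (nhds (dist u v))).add
    (buse_tendsto hτ v)).sub (buse_tendsto hτ u)).div_const 2
  refine Tendsto.congr (fun t => ?_) h
  unfold gromovProd
  rw [dist_comm v u]
  ring

lemma rGP_nonneg {τ : ℝ → Z} (hτ : IsGeodesicRay τ) (u v : Z) : 0 ≤ rGP τ u v :=
  ge_of_tendsto' (rGP_tendsto hτ u v) fun t => gp_nonneg _ _ _

lemma rGP_le {τ : ℝ → Z} (hτ : IsGeodesicRay τ) (u v : Z) : rGP τ u v ≤ dist u v := by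
  refine le_of_tendsto' (rGP_tendsto hτ u v) fun t => ?_
  rw [dist_comm]
  exact gp_le _ _ _

lemma buse_eq (τ : ℝ → Z) (u v : Z) : buse τ u - buse τ v = dist u v - 2 * rGP τ u v := by
  unfold rGP; ring


lemma joint_div {δ : ℝ} (hδ : 0 ≤ δ) (hhyp : IsDeltaHyperbolic Z δ)
    {τ τ' : ℝ → Z} (hτ : IsGeodesicRay τ) (hτ' : IsGeodesicRay τ')
    (hasym : EMetric.hausdorffEdist (τ '' Ici 0) (τ' '' Ici 0) ≠ ⊤) (v : Z) :
    ∃ C : ℝ, ∀ t, 0 ≤ t → ∀ s, 0 ≤ s → min t s - C ≤ gromovProd v (τ t) (τ' s) := by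
  set H : ℝ := (EMetric.hausdorffEdist (τ '' Ici 0) (τ' '' Ici 0)).toReal + 1 with hHdef
  have hH0 : 0 ≤ H := by positivity
  have hH : ∀ t, 0 ≤ t → ∃ s', 0 ≤ s' ∧ dist (τ t) (τ' s') ≤ H := by
    intro t ht
    have h1 : EMetric.infEdist (τ t) (τ' '' Ici 0)
        ≤ EMetric.hausdorffEdist (τ '' Ici 0) (τ' '' Ici 0) :=
      EMetric.infEdist_le_hausdorffEdist_of_mem ⟨t, ht, rfl⟩
    have h2 : EMetric.infEdist (τ t) (τ' '' Ici 0)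
        < EMetric.hausdorffEdist (τ '' Ici 0) (τ' '' Ici 0) + 1 :=
      lt_of_le_of_lt h1 (ENNReal.lt_add_right hasym one_ne_zero)
    obtain ⟨y, hy, hdy⟩ := EMetric.infEdist_lt_iff.mp h2
    obtain ⟨s', hs', rfl⟩ := hy
    refine ⟨s', hs', ?_⟩
    have hne : EMetric.hausdorffEdist (τ '' Ici 0) (τ' '' Ici 0) + 1 ≠ ⊤ :=
      ENNReal.add_ne_top.2 ⟨hasym, ENNReal.one_ne_top⟩
    have := ENNReal.toReal_mono hne hdy.le
    rw [ENNReal.toReal_add hasym ENNReal.one_ne_top, ENNReal.toReal_one] at this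
    rwa [dist_edist]
  set c0 : ℝ := dist v (τ 0) with hc0def
  set c1 : ℝ := dist v (τ' 0) with hc1def
  have hc0 : 0 ≤ c0 := dist_nonneg
  have hc1 : 0 ≤ c1 := dist_nonneg
  refine ⟨c0 + 2 * c1 + H + δ, ?_⟩
  intro t ht s hs
  obtain ⟨s', hs'0, hs'd⟩ := hH t ht
  -- basic distance estimates
  have hvt : t - c0 ≤ dist v (τ t) := ray_dist_ge hτ v ht
  have hvs : s - c1 ≤ dist v (τ' s) := ray_dist_ge hτ' v hs
  have hvs' : s' - c1 ≤ dist v (τ' s') := ray_dist_ge hτ' v hs'0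
  have hvs'le : dist v (τ' s') ≤ c1 + s' := by
    have := ray_dist_le hτ' v hs'0; linarith
  -- s' is large
  have hs'big : t - (c0 + c1 + H) ≤ s' := by
    have h := dist_triangle v (τ t) (τ' s')
    have h2 := dist_triangle v (τ' s') (τ t)
    rw [dist_comm (τ' s') (τ t)] at h2
    linarith
  -- g1 : gromovProd v (τ t) (τ' s') is large
  have hg1 : t - c0 - H ≤ gromovProd v (τ t) (τ' s') := by
    have := gp_ge_dist_sub v (τ t) (τ' s')
    linarith
  -- g2 : gromovProd v (τ' s') (τ' s) ≥ min s' s - c1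
  have hg2 : min s' s - c1 ≤ gromovProd v (τ' s') (τ' s) := by
    have hd : dist (τ' s') (τ' s) = |s' - s| := hτ' s' s hs'0 hs
    unfold gromovProd
    rw [hd]
    rcases le_total s s' with hc | hc
    · rw [abs_of_nonneg (by linarith), min_eq_right hc]; linarith
    · rw [abs_of_nonpos (by linarith), min_eq_left hc]; linarith
  have hhyp' := hhyp (τ t) v (τ' s') (τ' s)
  have hmin : min t s - (c0 + 2 * c1 + H) ≤ min (gromovProd v (τ t) (τ' s')) (gromovProd v (τ' s') (τ' s)) := by
    refine le_min ?_ ?_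
    · have := min_le_left t s; linarith
    · have h1 : min t s - (c0 + c1 + H) ≤ s' := le_trans (by have := min_le_left t s; linarith) hs'big
      have h2 : min t s - (c0 + c1 + H) ≤ s := by have := min_le_right t s; linarith
      have : min t s - (c0 + c1 + H) ≤ min s' s := le_min h1 h2
      linarith
  linarith

lemma rGP_congr_le {δ : ℝ} (hδ : 0 ≤ δ) (hhyp : IsDeltaHyperbolic Z δ)
    {τ τ' : ℝ → Z} (hτ : IsGeodesicRay τ) (hτ' : IsGeodesicRay τ')
    (hasym : EMetric.hausdorffEdist (τ '' Ici 0) (τ' '' Ici 0) ≠ ⊤) (u v : Z) :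
    rGP τ u v - δ ≤ rGP τ' u v := by
  obtain ⟨C, hC⟩ := joint_div hδ hhyp hτ hτ' hasym v
  have key : ∀ ε > 0, rGP τ u v - δ ≤ rGP τ' u v + ε := by
    intro ε hε
    have h1 : ∀ᶠ t in atTop, rGP τ u v - ε < gromovProd v u (τ t) :=
      (rGP_tendsto hτ u v).eventually (eventually_gt_nhds (by linarith))
    obtain ⟨t, ht1, ht2⟩ := (h1.and (eventually_ge_atTop (max 0 (C + dist u v)))).exists
    have ht0 : 0 ≤ t := le_trans (le_max_left _ _) ht2
    have htC : C + dist u v ≤ t := le_trans (le_max_right _ _) ht2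
    have hlim : rGP τ u v - ε - δ ≤ rGP τ' u v := by
      refine ge_of_tendsto (rGP_tendsto hτ' u v) ?_
      filter_upwards [eventually_ge_atTop (max 0 (C + dist u v))] with s hs
      have hs0 : 0 ≤ s := le_trans (le_max_left _ _) hs
      have hsC : C + dist u v ≤ s := le_trans (le_max_right _ _) hs
      have hbig : dist u v ≤ gromovProd v (τ t) (τ' s) := by
        have := hC t ht0 s hs0
        rcases le_total t s with hc | hc
        · rw [min_eq_left hc] at this; linarith
        · rw [min_eq_right hc] at this; linarith
      have hle : rGP τ u v ≤ dist u v := rGP_le hτ u v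
      have hh := hhyp u v (τ t) (τ' s)
      have : min (gromovProd v u (τ t)) (gromovProd v (τ t) (τ' s)) ≥ rGP τ u v - ε :=
        le_min (by linarith) (by linarith)
      linarith
    linarith
  by_contra hcon
  push_neg at hcon
  have := key ((rGP τ u v - δ - rGP τ' u v) / 2) (by linarith)
  linarith

lemma rGP_asym_abs {δ : ℝ} (hδ : 0 ≤ δ) (hhyp : IsDeltaHyperbolic Z δ)
    {τ τ' : ℝ → Z} (hτ : IsGeodesicRay τ) (hτ' : IsGeodesicRay τ')
    (hasym : EMetric.hausdorffEdist (τ '' Ici 0) (τ' '' Ici 0) ≠ ⊤) (u v : Z) :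
    |rGP τ u v - rGP τ' u v| ≤ δ := by
  have h1 := rGP_congr_le hδ hhyp hτ hτ' hasym u v
  have h2 := rGP_congr_le hδ hhyp hτ' hτ (by rwa [EMetric.hausdorffEdist, EMetric.hausdorffEdist_comm] at hasym) u v
  rw [abs_le]
  constructor <;> linarith

end Stmt19

open Stmt19 in
/-- For a loxodromic isometry `g` with axis `γ`, any geodesic ray `σ` with endpoint the
attracting fixed point and any `w ∈ Z`: `|β_σ(w, gw) − ℓ(g)| ≤ 92δ`. -/
theorem stmt19 {Z : Type*} [MetricSpace Z] [ProperSpace Z] {δ : ℝ}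
    (hgeo : IsGeodesicSpace Z) (hhyp : IsDeltaHyperbolic Z δ)
    (g : Z ≃ᵢ Z)
    (γ : ℝ → Z) (hγ : IsBiInfGeodesic γ)
    (hgpos : AsymptoticRays (fun t => g (γ t)) (fun t => γ t))
    (hgneg : AsymptoticRays (fun t => g (γ (-t))) (fun t => γ (-t)))
    (hattr : Filter.Tendsto
      (fun p : ℕ × ℝ => gromovProd (γ 0) ((g ^ p.1) (γ 0)) (γ p.2))
      (Filter.atTop ×ˢ Filter.atTop) Filter.atTop)
    (ℓ : ℝ)
    (hℓ : Filter.Tendsto (fun n : ℕ => dist (γ 0) ((g ^ n) (γ 0)) / n)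
      Filter.atTop (nhds ℓ))
    (σ : ℝ → Z) (hσ : IsGeodesicRay σ)
    (hσasym : AsymptoticRays σ (fun t => γ t))
    (w : Z) (b : ℝ)
    (hb : Filter.Tendsto (fun t => dist w (σ t) - dist (g w) (σ t))
      Filter.atTop (nhds b)) :
    |b - ℓ| ≤ 92 * δ := by
  classical
  set x := γ 0 with hxdef
  -- δ is nonnegative
  have hδ0 : 0 ≤ δ := by
    have h := hhyp w w w w
    have h0 : gromovProd w w w = 0 := by unfold gromovProd; simp
    rw [h0, min_self] at h
    linarith
  -- basic ray facts
  have hγray : IsGeodesicRay (fun t => γ t) := fun s t _ _ => hγ s t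
  have hσγ : EMetric.hausdorffEdist (σ '' Ici 0) ((fun t => γ t) '' Ici 0) ≠ ⊤ := hσasym
  have hγσ : EMetric.hausdorffEdist ((fun t => γ t) '' Ici 0) (σ '' Ici 0) ≠ ⊤ := by
    rwa [EMetric.hausdorffEdist, EMetric.hausdorffEdist_comm] at hσγ
  -- identification of b
  have hbeq : b = buse σ w - buse σ (g w) := by
    refine tendsto_nhds_unique hb ?_
    exact ((buse_tendsto hσ w).sub (buse_tendsto hσ (g w))).congr (fun t => by ring)
  -- the rays (g^k)⁻¹ ∘ σ
  have hrayk : ∀ k : ℕ, IsGeodesicRay (fun t => ((g ^ k)⁻¹ : Z ≃ᵢ Z) (σ t)) := by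
    intro k s t hs ht
    rw [IsometryEquiv.dist_eq]
    exact hσ s t hs ht
  -- finiteness is transitive
  have hfin : ∀ (s u t : Set Z), EMetric.hausdorffEdist s t ≠ ⊤ →
      EMetric.hausdorffEdist t u ≠ ⊤ → EMetric.hausdorffEdist s u ≠ ⊤ := by
    intro s u t h1 h2
    have htri := EMetric.hausdorffEdist_triangle (s := s) (t := t) (u := u)
    have hlt : EMetric.hausdorffEdist s u < ⊤ :=
      lt_of_le_of_lt htri (ENNReal.add_lt_top.2 ⟨h1.lt_top, h2.lt_top⟩)
    exact hlt.ne
  have hinvimg : ∀ (e : Z ≃ᵢ Z) (B : Set Z), (⇑(e⁻¹ : Z ≃ᵢ Z)) '' ((⇑e) '' B) = B := by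
    intro e B
    rw [← Set.image_comp]
    have hcomp : (⇑(e⁻¹ : Z ≃ᵢ Z) ∘ ⇑e) = id := funext fun z => e.inv_apply_self z
    rw [hcomp, Set.image_id]
  -- g⁻¹ ∘ σ is asymptotic to σ
  have hgA : EMetric.hausdorffEdist ((⇑g) '' ((fun t => γ t) '' Ici 0)) ((fun t => γ t) '' Ici 0) ≠ ⊤ := by
    have him : (⇑g) '' ((fun t => γ t) '' Ici 0) = (fun t => g (γ t)) '' Ici 0 :=
      Set.image_image _ _ _
    rw [him]
    exact hgpos
  have hsymA : EMetric.hausdorffEdist ((⇑(g⁻¹ : Z ≃ᵢ Z)) '' ((fun t => γ t) '' Ici 0))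
      ((fun t => γ t) '' Ici 0) ≠ ⊤ := by
    have h2 : EMetric.hausdorffEdist
        ((⇑(g⁻¹ : Z ≃ᵢ Z)) '' ((⇑g) '' ((fun t => γ t) '' Ici 0)))
        ((⇑(g⁻¹ : Z ≃ᵢ Z)) '' ((fun t => γ t) '' Ici 0))
        = EMetric.hausdorffEdist ((⇑g) '' ((fun t => γ t) '' Ici 0)) ((fun t => γ t) '' Ici 0) :=
      EMetric.hausdorffEdist_image (IsometryEquiv.isometry _)
    rw [hinvimg] at h2
    rw [EMetric.hausdorffEdist] at h2 ⊢; rw [EMetric.hausdorffEdist_comm, h2]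
    exact hgA
  have hinvS : EMetric.hausdorffEdist ((⇑(g⁻¹ : Z ≃ᵢ Z)) '' (σ '' Ici 0)) (σ '' Ici 0) ≠ ⊤ := by
    have h1 : EMetric.hausdorffEdist ((⇑(g⁻¹ : Z ≃ᵢ Z)) '' (σ '' Ici 0))
        ((⇑(g⁻¹ : Z ≃ᵢ Z)) '' ((fun t => γ t) '' Ici 0)) ≠ ⊤ := by
      rw [EMetric.hausdorffEdist, EMetric.hausdorffEdist_image (IsometryEquiv.isometry _)]
      exact hσγ
    refine hfin _ _ _ h1 (hfin _ _ _ hsymA hγσ)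
  -- all the rays (g^k)⁻¹ ∘ σ are asymptotic to σ
  have hasymk : ∀ k : ℕ, EMetric.hausdorffEdist
      ((fun t => ((g ^ k)⁻¹ : Z ≃ᵢ Z) (σ t)) '' Ici 0) (σ '' Ici 0) ≠ ⊤ := by
    intro k
    induction k with
    | zero =>
      have him : (fun t => ((g ^ 0)⁻¹ : Z ≃ᵢ Z) (σ t)) '' Ici 0 = σ '' Ici 0 := by
        simp
      rw [him, EMetric.hausdorffEdist, EMetric.hausdorffEdist_self]
      exact ENNReal.zero_ne_top
    | succ k ih =>
      have hke : (fun t => ((g ^ (k+1))⁻¹ : Z ≃ᵢ Z) (σ t)) '' Ici 0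
          = (⇑(g⁻¹ : Z ≃ᵢ Z)) '' ((fun t => ((g ^ k)⁻¹ : Z ≃ᵢ Z) (σ t)) '' Ici 0) := by
        rw [Set.image_image]
        have hmul : (g ^ (k+1))⁻¹ = (g⁻¹ : Z ≃ᵢ Z) * (g ^ k)⁻¹ := by
          rw [pow_succ, mul_inv_rev]
        refine congrArg (fun f => f '' Ici 0) ?_
        funext t
        rw [hmul]
        rfl
      rw [hke]
      have h1 : EMetric.hausdorffEdist
          ((⇑(g⁻¹ : Z ≃ᵢ Z)) '' ((fun t => ((g ^ k)⁻¹ : Z ≃ᵢ Z) (σ t)) '' Ici 0))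
          ((⇑(g⁻¹ : Z ≃ᵢ Z)) '' (σ '' Ici 0)) ≠ ⊤ := by
        rw [EMetric.hausdorffEdist, EMetric.hausdorffEdist_image (IsometryEquiv.isometry _)]
        exact ih
      exact hfin _ _ _ h1 hinvS
  -- Busemann equivariance
  have hbk : ∀ (k : ℕ) (z : Z),
      buse (fun t => ((g ^ k)⁻¹ : Z ≃ᵢ Z) (σ t)) z = buse σ ((g ^ k) z) := by
    intro k z
    unfold buse
    refine iInf_congr fun t => ?_
    congr 1
    calc dist z (((g ^ k)⁻¹ : Z ≃ᵢ Z) (σ (max t 0)))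
        = dist (((g ^ k)⁻¹ : Z ≃ᵢ Z) ((g ^ k) z)) (((g ^ k)⁻¹ : Z ≃ᵢ Z) (σ (max t 0))) := by
          rw [IsometryEquiv.inv_apply_self]
      _ = dist ((g ^ k) z) (σ (max t 0)) := IsometryEquiv.dist_eq _ _ _
  -- the orbit distance sequence
  set e : ℕ → ℝ := fun m => dist w ((g ^ m) w) with hedef
  have hD : ∀ m : ℕ, |e m - dist x ((g ^ m) x)| ≤ 2 * dist w x := by
    intro m
    have hgm : dist ((g ^ m) x) ((g ^ m) w) = dist x w := IsometryEquiv.dist_eq _ _ _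
    have hgm2 : dist ((g ^ m) w) ((g ^ m) x) = dist w x := IsometryEquiv.dist_eq _ _ _
    have h1 := dist_triangle4 w x ((g ^ m) x) ((g ^ m) w)
    have h2 := dist_triangle4 x w ((g ^ m) w) ((g ^ m) x)
    have hcomm : dist x w = dist w x := dist_comm x w
    rw [abs_le]
    constructor <;> [skip; skip] <;> simp only [hedef] <;> linarith
  have heℓ : Tendsto (fun m : ℕ => e m / m) atTop (nhds ℓ) := by
    have hup : Tendsto (fun m : ℕ => (dist x ((g ^ m) x) + 2 * dist w x) / m) atTop (nhds ℓ) := by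
      have h2 : Tendsto (fun m : ℕ => (2 * dist w x) / m) atTop (nhds 0) :=
        tendsto_const_div_atTop_nhds_zero_nat _
      have h3 := hℓ.add h2
      rw [add_zero] at h3
      exact h3.congr fun m => (add_div _ _ _).symm
    have hlo : Tendsto (fun m : ℕ => (dist x ((g ^ m) x) - 2 * dist w x) / m) atTop (nhds ℓ) := by
      have h2 : Tendsto (fun m : ℕ => (2 * dist w x) / m) atTop (nhds 0) :=
        tendsto_const_div_atTop_nhds_zero_nat _
      have h3 := hℓ.sub h2
      rw [sub_zero] at h3
      exact h3.congr fun m => (sub_div _ _ _).symm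
    refine tendsto_of_tendsto_of_tendsto_of_le_of_le' hlo hup ?_ ?_
    · filter_upwards [eventually_ge_atTop 1] with m hm
      have hm0 : (0:ℝ) < (m : ℝ) := by exact_mod_cast Nat.pos_of_ne_zero (by omega)
      have habs := hD m
      rw [abs_le] at habs
      exact (div_le_div_iff_of_pos_right hm0).2 (by linarith [habs.1])
    · filter_upwards [eventually_ge_atTop 1] with m hm
      have hm0 : (0:ℝ) < (m : ℝ) := by exact_mod_cast Nat.pos_of_ne_zero (by omega)
      have habs := hD m
      rw [abs_le] at habs
      exact (div_le_div_iff_of_pos_right hm0).2 (by linarith [habs.2])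
  -- the Gromov products of g^m w with the attracting point go to infinity
  have hq : ∀ M : ℝ, ∃ N : ℕ, ∀ m, N ≤ m → M ≤ rGP σ ((g ^ m) w) (g w) := by
    intro M
    obtain ⟨C, hC⟩ := joint_div hδ0 hhyp hγray hσ hγσ x
    set K : ℝ := δ + dist x (g w) + dist x w with hKdef
    have h1 : ∀ᶠ p : ℕ × ℝ in atTop ×ˢ atTop, M + K ≤ gromovProd x ((g ^ p.1) x) (γ p.2) :=
      hattr.eventually_ge_atTop (M + K)
    rw [Filter.eventually_prod_iff] at h1
    obtain ⟨pa, hpa, pb, hpb, himp⟩ := h1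
    obtain ⟨N, hN⟩ := Filter.eventually_atTop.mp hpa
    obtain ⟨S, hS⟩ := Filter.eventually_atTop.mp hpb
    refine ⟨N, fun m hm => ?_⟩
    set s₀ : ℝ := max S (max 0 (M + K + C)) with hs₀def
    have hs₀0 : (0:ℝ) ≤ s₀ := le_trans (le_max_left 0 _) (le_max_right S _)
    have hs₀C : M + K + C ≤ s₀ := le_trans (le_max_right 0 _) (le_max_right S _)
    refine ge_of_tendsto (rGP_tendsto hσ ((g ^ m) w) (g w)) ?_
    filter_upwards [eventually_ge_atTop s₀] with t ht
    have ht0 : 0 ≤ t := le_trans hs₀0 ht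
    have hA : M + K ≤ gromovProd x ((g ^ m) x) (γ s₀) :=
      himp (hN m hm) (hS s₀ (le_max_left _ _))
    have hB : M + K ≤ gromovProd x (γ s₀) (σ t) := by
      have h := hC s₀ hs₀0 t ht0
      have hmin : M + K + C ≤ min s₀ t := le_min hs₀C (le_trans hs₀C ht)
      linarith
    have hhyp1 := hhyp ((g ^ m) x) x (γ s₀) (σ t)
    have h3 : M + K - δ ≤ gromovProd x ((g ^ m) x) (σ t) := by
      have hminle : M + K ≤ min (gromovProd x ((g ^ m) x) (γ s₀)) (gromovProd x (γ s₀) (σ t)) :=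
        le_min hA hB
      linarith
    have h4 := gp_mid_move x ((g ^ m) x) ((g ^ m) w) (σ t)
    have h5 := gp_base_move x (g w) ((g ^ m) w) (σ t)
    have hdm : dist ((g ^ m) x) ((g ^ m) w) = dist x w := IsometryEquiv.dist_eq _ _ _
    rw [hdm] at h4
    linarith
  -- LOWER BOUND : ℓ - 2δ ≤ b
  have hlow : ℓ - 2 * δ ≤ b := by
    have hforall : ∀ ε > (0:ℝ), ℓ - 2 * δ ≤ b + ε := by
      intro ε hε
      set p : ℝ := rGP σ w (g w) with hpdef
      obtain ⟨Nq, hNq⟩ := hq p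
      obtain ⟨k, hkN, hk⟩ : ∃ k, Nq ≤ k ∧ ℓ - ε ≤ e (k+1) - e k := by
        by_contra hcon
        push_neg at hcon
        have hind : ∀ j : ℕ, e (j + Nq) ≤ e Nq + j * (ℓ - ε) := by
          intro j
          induction j with
          | zero => simp
          | succ j ih =>
            have h := hcon (j + Nq) (Nat.le_add_left _ _)
            have hidx : (j + 1) + Nq = (j + Nq) + 1 := by omega
            rw [hidx]
            push_cast
            linarith [h]
        have h1 : Tendsto (fun j : ℕ => e (j + Nq) / ((j : ℝ) + (Nq : ℝ))) atTop (nhds ℓ) := by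
          have h0 := heℓ.comp (tendsto_add_atTop_nat Nq)
          refine h0.congr fun j => ?_
          simp only [Function.comp_apply]
          push_cast
          ring_nf
        have h2 : Tendsto (fun j : ℕ => (e Nq + j * (ℓ - ε)) / ((j : ℝ) + (Nq : ℝ)))
            atTop (nhds (ℓ - ε)) := by
          have hz : Tendsto (fun j : ℕ => ((j : ℝ) + (Nq : ℝ))⁻¹) atTop (nhds 0) :=
            tendsto_inv_atTop_zero.comp
              (tendsto_atTop_add_const_right atTop ((Nq : ℝ)) tendsto_natCast_atTop_atTop)
          have hmain := (tendsto_const_nhds (x := ℓ - ε) (f := atTop)).add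
            (hz.const_mul (e Nq - (Nq : ℝ) * (ℓ - ε)))
          rw [mul_zero, add_zero] at hmain
          refine hmain.congr' ?_
          filter_upwards [eventually_ge_atTop 1] with j hj
          have hj1 : (1:ℝ) ≤ (j : ℝ) := by exact_mod_cast hj
          have hj0 : (0:ℝ) < (j : ℝ) + (Nq : ℝ) := by
            have : (0:ℝ) ≤ (Nq : ℝ) := Nat.cast_nonneg _
            linarith
          field_simp
          ring
        have hle : ℓ ≤ ℓ - ε := by
          refine le_of_tendsto_of_tendsto h1 h2 ?_
          filter_upwards [eventually_ge_atTop 1] with j hj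
          have hj1 : (1:ℝ) ≤ (j : ℝ) := by exact_mod_cast hj
          have hj0 : (0:ℝ) < (j : ℝ) + (Nq : ℝ) := by
            have : (0:ℝ) ≤ (Nq : ℝ) := Nat.cast_nonneg _
            linarith
          exact (div_le_div_iff_of_pos_right hj0).2 (hind j)
        linarith
      have hqk : p ≤ rGP σ ((g ^ (k+1)) w) (g w) := hNq (k+1) (by omega)
      set q : ℝ := rGP σ ((g ^ (k+1)) w) (g w) with hqdef
      have htm : Tendsto
          (fun t => min (gromovProd (g w) w (σ t)) (gromovProd (g w) (σ t) ((g ^ (k+1)) w)))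
          atTop (nhds (min p q)) := by
        have h1 := rGP_tendsto hσ w (g w)
        have h2 := (rGP_tendsto hσ ((g ^ (k+1)) w) (g w)).congr
          (fun t => gp_comm (g w) ((g ^ (k+1)) w) (σ t))
        exact h1.min h2
      have hub : min p q ≤ gromovProd (g w) w ((g ^ (k+1)) w) + δ := by
        refine le_of_tendsto htm ?_
        filter_upwards with t
        have h := hhyp w (g w) (σ t) ((g ^ (k+1)) w)
        linarith
      rw [min_eq_left hqk] at hub
      have hcomp1 : (g ^ (k+1)) w = g ((g ^ k) w) := by rw [pow_succ']; rfl
      have hgp : gromovProd (g w) w ((g ^ (k+1)) w) = (e 1 + e k - e (k+1)) / 2 := by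
        unfold gromovProd
        have h1 : dist (g w) w = e 1 := by
          rw [dist_comm]
          simp only [hedef, pow_one]
        have h2 : dist (g w) ((g ^ (k+1)) w) = e k := by
          rw [hcomp1, IsometryEquiv.dist_eq]
        have h3 : dist w ((g ^ (k+1)) w) = e (k+1) := rfl
        rw [h1, h2, h3]
      have hbp2 : b = e 1 - 2 * p := by
        rw [hbeq, buse_eq]
        simp only [hedef, hpdef, pow_one]
      rw [hbp2]
      rw [hgp] at hub
      linarith
    by_contra hcon
    push_neg at hcon
    have := hforall ((ℓ - 2 * δ - b) / 2) (by linarith)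
    linarith
  -- UPPER BOUND : b ≤ ℓ + 2δ
  have hup : b ≤ ℓ + 2 * δ := by
    have hterm : ∀ k : ℕ, b - 2 * δ ≤ buse σ ((g ^ k) w) - buse σ ((g ^ (k+1)) w) := by
      intro k
      have habs := rGP_congr_le hδ0 hhyp (hrayk k) hσ (hasymk k) w (g w)
      have h1 : buse σ ((g ^ k) w) = buse (fun t => ((g ^ k)⁻¹ : Z ≃ᵢ Z) (σ t)) w :=
        (hbk k w).symm
      have hcomp : (g ^ (k+1)) w = (g ^ k) (g w) := by rw [pow_succ]; rfl
      have h2 : buse σ ((g ^ (k+1)) w) = buse (fun t => ((g ^ k)⁻¹ : Z ≃ᵢ Z) (σ t)) (g w) := by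
        rw [hcomp, ← hbk k (g w)]
      rw [h1, h2, buse_eq]
      have hb2 : b = dist w (g w) - 2 * rGP σ w (g w) := by rw [hbeq, buse_eq]
      linarith
    have hsum : ∀ n : ℕ, (n : ℝ) * (b - 2 * δ) ≤ e n := by
      intro n
      have htel : buse σ w - buse σ ((g ^ n) w)
          = ∑ k ∈ Finset.range n, (buse σ ((g ^ k) w) - buse σ ((g ^ (k+1)) w)) := by
        rw [Finset.sum_range_sub' (fun k => buse σ ((g ^ k) w))]
        have h0 : (g ^ 0) w = w := by simp
        rw [h0]
      have hge : (n : ℝ) * (b - 2 * δ) ≤ buse σ w - buse σ ((g ^ n) w) := by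
        rw [htel]
        calc (n : ℝ) * (b - 2 * δ) = ∑ _k ∈ Finset.range n, (b - 2 * δ) := by
              rw [Finset.sum_const, Finset.card_range, nsmul_eq_mul]
          _ ≤ _ := Finset.sum_le_sum fun k _ => hterm k
      exact le_trans hge (buse_diff_le hσ w ((g ^ n) w))
    have hble : b - 2 * δ ≤ ℓ := by
      refine ge_of_tendsto heℓ ?_
      filter_upwards [eventually_ge_atTop 1] with n hn
      have hn0 : (0:ℝ) < (n : ℝ) := by exact_mod_cast Nat.pos_of_ne_zero (by omega)
      rw [le_div_iff₀ hn0]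
      calc (b - 2 * δ) * n = (n : ℝ) * (b - 2 * δ) := by ring
        _ ≤ e n := hsum n
    linarith
  exact abs_le.2 ⟨by linarith, by linarith⟩
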